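/- Let V, R > 0 and β₀, β₁, β₂ ∈ ℝ with β₂ > 0. Define h(P) = β₂P² + β₁P + β₀, ψ(y) = (V²/(2R))·(1 − √(1 − (4R/V²)·y)), g = ψ ∘ h, and g⁻¹(x) = −β₁/(2β₂) + √(−R·x²/(β₂V²) + (x − β₀)/β₂ + β₁²/(4β₂²)). Then for every P with P ≥ −β₁/(2β₂) and h(P) ≤ V²/(4R), the radicand −R·g(P)²/(β₂V²) + (g(P) − β₀)/β₂ + β₁²/(4β₂²) is nonnegative and g⁻¹(g(P)) = P. -/

import Mathlib

/-- `g⁻¹` is a left inverse of the battery power function `g = ψ ∘ h` on the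
domain where `g` is real-valued and nondecreasing, and the radicand appearing
in `g⁻¹(g(P))` is nonnegative there. -/
theorem stmt_4 (V R β₀ β₁ β₂ : ℝ) (hV : 0 < V) (hR : 0 < R) (hβ₂ : 0 < β₂)
    (h : ℝ → ℝ) (ψ : ℝ → ℝ) (g : ℝ → ℝ) (ginv : ℝ → ℝ)
    (hh : ∀ P, h P = β₂ * P ^ 2 + β₁ * P + β₀)
    (hψ : ∀ y, ψ y = V ^ 2 / (2 * R) * (1 - Real.sqrt (1 - 4 * R / V ^ 2 * y)))
    (hg : ∀ P, g P = ψ (h P))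
    (hginv : ∀ x, ginv x = -β₁ / (2 * β₂) +
      Real.sqrt (-(R * x ^ 2) / (β₂ * V ^ 2) + (x - β₀) / β₂ + β₁ ^ 2 / (4 * β₂ ^ 2))) :
    ∀ P : ℝ, -β₁ / (2 * β₂) ≤ P → h P ≤ V ^ 2 / (4 * R) →
      0 ≤ -(R * (g P) ^ 2) / (β₂ * V ^ 2) + (g P - β₀) / β₂ + β₁ ^ 2 / (4 * β₂ ^ 2) ∧
        ginv (g P) = P := by
  intro P hP hPle
  have hV2 : (0:ℝ) < V ^ 2 := by positivity
  set y := h P with hyP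
  have hnn : 0 ≤ 1 - 4 * R / V ^ 2 * y := by
    have h1 : 4 * R / V ^ 2 * y ≤ 4 * R / V ^ 2 * (V ^ 2 / (4 * R)) :=
      mul_le_mul_of_nonneg_left hPle (by positivity)
    have h2 : 4 * R / V ^ 2 * (V ^ 2 / (4 * R)) = 1 := by field_simp
    linarith
  set s := Real.sqrt (1 - 4 * R / V ^ 2 * y) with hsdef
  have hs : s ^ 2 = 1 - 4 * R / V ^ 2 * y := Real.sq_sqrt hnn
  have hs' : V ^ 2 * s ^ 2 = V ^ 2 - 4 * R * y := by
    rw [hs]; field_simp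
  have hgP : g P = V ^ 2 / (2 * R) * (1 - s) := by
    rw [hg, hψ]
  have key : -(R * (g P) ^ 2) / (β₂ * V ^ 2) + (g P - β₀) / β₂ + β₁ ^ 2 / (4 * β₂ ^ 2)
      = (P + β₁ / (2 * β₂)) ^ 2 := by
    rw [hgP]
    have hs2 : V ^ 2 * s ^ 2 = V ^ 2 - 4 * R * (β₂ * P ^ 2 + β₁ * P + β₀) := by
      rw [hs', hyP, hh]
    field_simp
    linear_combination (-(4 * β₂)) * hs2
  constructor
  · rw [key]; positivity
  · rw [hginv, key, Real.sqrt_sq (by linarith [neg_div (2*β₂) β₁] : 0 ≤ P + β₁ / (2 * β₂))]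
    ring
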